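/- arXiv:2409.00350 — 3 statements merged into one kernel-verified Lean document; each statement's English description precedes it below -/
import Mathlib

section
/- For every tree G, the lower monitoring arc-geodetic number of G equals the number of vertices of degree 1 in G. -/
namespace MAG

variable {V : Type*}

/-- Directed walk from `x` to `y` whose list of visited vertices is `l`. -/
inductive DWalk (A : V → V → Prop) : V → V → List V → Prop
  | nil (v : V) : DWalk A v v [v]
  | cons {u v w : V} {l : List V} (h : A u v) (p : DWalk A v w l) :
      DWalk A u w (u :: l)

/-- The arc `(a, b)` lies on the walk with vertex list `l`. -/
def ArcOn (a b : V) (l : List V) : Prop :=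
  ∃ l₁ l₂ : List V, l = l₁ ++ a :: b :: l₂

/-- `l` is (the vertex list of) a shortest directed walk from `x` to `y`. -/
def IsShortest (A : V → V → Prop) (x y : V) (l : List V) : Prop :=
  DWalk A x y l ∧ ∀ l' : List V, DWalk A x y l' → l.length ≤ l'.length

/-- `x` and `y` monitor the arc `(a, b)`: the arc lies on every shortest
directed path from `x` to `y` (and such a path exists), or symmetrically
from `y` to `x`. -/
def Monitors (A : V → V → Prop) (x y a b : V) : Prop :=
  ((∃ l, IsShortest A x y l) ∧ ∀ l, IsShortest A x y l → ArcOn a b l) ∨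
  ((∃ l, IsShortest A y x l) ∧ ∀ l, IsShortest A y x l → ArcOn a b l)

/-- A monitoring arc-geodetic set of the digraph `A`. -/
def IsMAGSet (A : V → V → Prop) (M : Set V) : Prop :=
  ∀ a b : V, A a b → ∃ x ∈ M, ∃ y ∈ M, x ≠ y ∧ Monitors A x y a b

/-- The monitoring arc-geodetic number of the digraph `A`. -/
noncomputable def mag (A : V → V → Prop) [Fintype V] : ℕ :=
  sInf {n | ∃ M : Finset V, IsMAGSet A (M : Set V) ∧ M.card = n}

/-- `A` is an orientation of the undirected simple graph `G`. -/
structure IsOrientation (G : SimpleGraph V) (A : V → V → Prop) : Prop where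
  adj_iff : ∀ u v : V, G.Adj u v ↔ (A u v ∨ A v u)
  asymm : ∀ u v : V, A u v → ¬ A v u

/-- The lower monitoring arc-geodetic number of `G`. -/
noncomputable def magMinus (G : SimpleGraph V) [Fintype V] : ℕ :=
  sInf {n | ∃ A : V → V → Prop, IsOrientation G A ∧ mag A = n}

/-- The upper monitoring arc-geodetic number of `G`. -/
noncomputable def magPlus (G : SimpleGraph V) [Fintype V] : ℕ :=
  sSup {n | ∃ A : V → V → Prop, IsOrientation G A ∧ mag A = n}

/-- A source: a vertex with no in-neighbours. -/
def IsSource (A : V → V → Prop) (v : V) : Prop := ∀ w, ¬ A w v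

/-- A sink: a vertex with no out-neighbours. -/
def IsSink (A : V → V → Prop) (v : V) : Prop := ∀ w, ¬ A v w

/-- An oriented graph: no loops and no pair of opposite arcs. -/
def IsOrientedGraph (A : V → V → Prop) : Prop :=
  (∀ v, ¬ A v v) ∧ ∀ u v : V, A u v → ¬ A v u

/-- The underlying undirected graph of `A` is connected. -/
def IsConnectedDigraph (A : V → V → Prop) : Prop :=
  ∀ x y : V, Relation.ReflTransGen (fun a b => A a b ∨ A b a) x y



set_option linter.unusedSectionVars false

open SimpleGraph

section Aux
variable {A : V → V → Prop} {x y : V} {l : List V}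

variable {A : V → V → Prop} {x y : V} {l : List V}

lemma DWalk.ne_nil (h : DWalk A x y l) : l ≠ [] := by cases h <;> simp

lemma DWalk.head_eq (h : DWalk A x y l) : ∃ t, l = x :: t := by
  cases h with
  | nil v => exact ⟨[], rfl⟩
  | cons h p => exact ⟨_, rfl⟩

lemma DWalk.one_le_length (h : DWalk A x y l) : 1 ≤ l.length := by
  cases h <;> simp

lemma DWalk.getLast_eq (h : DWalk A x y l) (hne : l ≠ []) : l.getLast hne = y := by
  induction h with
  | nil v => rfl
  | cons h p ih => rw [List.getLast_cons p.ne_nil]; exact ih p.ne_nil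

lemma DWalk.append {a b : V} {la lb : List V} (h1 : DWalk A x a la) (hab : A a b)
    (h2 : DWalk A b y lb) : DWalk A x y (la ++ lb) := by
  induction h1 with
  | nil v => exact .cons hab h2
  | cons h p ih => exact .cons h (ih hab)

lemma DWalk.eq_single (h : DWalk A x y l) (hl : l.length = 1) : x = y ∧ l = [x] := by
  cases h with
  | nil v => exact ⟨rfl, rfl⟩
  | cons h p =>
    rw [List.length_cons] at hl
    have := p.one_le_length
    omega

lemma DWalk.arc (h : DWalk A x y l) {a b : V} {l₁ l₂ : List V}
    (he : l = l₁ ++ a :: b :: l₂) : A a b := by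
  induction h generalizing l₁ with
  | nil v =>
    have := congrArg List.length he
    simp only [List.length_cons, List.length_append, List.length_nil] at this
    omega
  | cons h p ih =>
    cases l₁ with
    | nil =>
      simp only [List.nil_append, List.cons.injEq] at he
      obtain ⟨rfl, he⟩ := he
      obtain ⟨t, ht⟩ := p.head_eq
      rw [ht] at he
      injection he with h1 _
      exact h1 ▸ h
    | cons c t =>
      simp only [List.cons_append, List.cons.injEq] at he
      exact ih he.2

lemma DWalk.start_of_source {v : V} (hv : IsSource A v) (h : DWalk A x y l)
    {l₁ l₂ : List V} (he : l = l₁ ++ v :: l₂) : l₁ = [] ∧ x = v := by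
  induction h generalizing l₁ with
  | nil w =>
    cases l₁ with
    | nil => simp only [List.nil_append, List.cons.injEq] at he; exact ⟨rfl, he.1⟩
    | cons c t =>
      have := congrArg List.length he
      simp only [List.length_cons, List.length_append, List.length_nil] at this
      omega
  | cons h p ih =>
    cases l₁ with
    | nil =>
      simp only [List.nil_append, List.cons.injEq] at he
      exact ⟨rfl, he.1⟩
    | cons c t =>
      simp only [List.cons_append, List.cons.injEq] at he
      obtain ⟨ht, hw⟩ := ih he.2
      exact absurd (hw ▸ h) (hv _)

lemma DWalk.end_of_sink {v : V} (hv : IsSink A v) (h : DWalk A x y l)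
    {l₁ l₂ : List V} (he : l = l₁ ++ v :: l₂) : y = v := by
  cases l₂ with
  | nil =>
    subst he
    have h1 := h.getLast_eq (by simp)
    have h2 : (l₁ ++ [v]).getLast (by simp) = v := List.getLast_concat
    exact h1.symm.trans h2
  | cons c t => exact absurd (h.arc he) (hv c)

lemma DWalk.length_eq {f : V → ℕ} (hf : ∀ u v, A u v → f v = f u + 1)
    (h : DWalk A x y l) : l.length + f x = f y + 1 := by
  induction h with
  | nil v => simp only [List.length_singleton]; omega
  | cons h p ih => have := hf _ _ h; simp only [List.length_cons]; omega

lemma DWalk.unique (huniq : ∀ v u₁ u₂, A u₁ v → A u₂ v → u₁ = u₂) :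
    ∀ {l l' : List V} {x x' : V}, DWalk A x y l → DWalk A x' y l' →
      l.length = l'.length → l = l' := by
  intro l l' x x' h
  induction h generalizing l' x' with
  | nil v =>
    intro h' hlen
    have h1 : l'.length = 1 := by rw [← hlen]; rfl
    obtain ⟨hx, hl'⟩ := h'.eq_single h1
    rw [hl', hx]
  | cons h p ih =>
    intro h' hlen
    cases h' with
    | nil w =>
      rw [List.length_cons] at hlen
      have := p.one_le_length
      simp only [List.length_singleton] at hlen
      omega
    | cons h2 p2 =>
      rw [List.length_cons, List.length_cons] at hlen
      have hm := ih p2 (by omega)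
      obtain ⟨t, ht⟩ := p.head_eq
      obtain ⟨t', ht'⟩ := p2.head_eq
      subst hm
      rw [ht] at ht'
      injection ht' with hv _
      have hux := huniq _ _ _ (hv ▸ h) h2
      rw [hux]

lemma DWalk.eq_pair (h : DWalk A x y l) (h2 : l.length = 2) : l = [x, y] := by
  cases h with
  | nil v => simp at h2
  | cons h p =>
    rw [List.length_cons] at h2
    obtain ⟨rfl, hm⟩ := p.eq_single (by omega)
    rw [hm]

end Aux

section TreeLemmas
variable {V : Type*} [DecidableEq V] {G : SimpleGraph V}

variable {V : Type*} [DecidableEq V] {G : SimpleGraph V}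

lemma exists_geodesic_path (hc : G.Connected) (u v : V) :
    ∃ p : G.Walk u v, p.IsPath ∧ p.length = G.dist u v := by
  obtain ⟨p, hp⟩ := hc.exists_walk_length_eq_dist u v
  exact ⟨p.bypass, p.bypass_isPath,
    le_antisymm (hp ▸ p.length_bypass_le) (SimpleGraph.dist_le _)⟩

lemma concat_isPath {u v w : V} {p : G.Walk u v} (hp : p.IsPath) (h : G.Adj v w)
    (hw : w ∉ p.support) : (p.concat h).IsPath := by
  rw [← Walk.isPath_reverse_iff, Walk.reverse_concat, Walk.cons_isPath_iff]
  exact ⟨hp.reverse, by rwa [Walk.support_reverse, List.mem_reverse]⟩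

lemma adj_dist_ne (hc : G.Connected) (ha : G.IsAcyclic) (r : V) {u v : V} (h : G.Adj u v) :
    G.dist r u ≠ G.dist r v := by
  intro heq
  obtain ⟨p, hp, hpl⟩ := exists_geodesic_path hc r u
  by_cases hv : v ∈ p.support
  · have h1 : G.dist r v ≤ (p.takeUntil v hv).length := SimpleGraph.dist_le _
    have h2 : G.dist v u ≤ (p.dropUntil v hv).length := SimpleGraph.dist_le _
    have h3 : (p.takeUntil v hv).length + (p.dropUntil v hv).length = p.length := by
      rw [← Walk.length_append, Walk.take_spec]
    have h4 : G.dist v u = 1 := SimpleGraph.dist_eq_one_iff_adj.mpr h.symm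
    omega
  · obtain ⟨q, hq, hql⟩ := exists_geodesic_path hc r v
    have hpath := concat_isPath hp h hv
    have huniq := ha.path_unique ⟨p.concat h, hpath⟩ ⟨q, hq⟩
    have hw : p.concat h = q := congrArg Subtype.val huniq
    have hl := congrArg Walk.length hw
    rw [Walk.length_concat] at hl
    omega

lemma unique_parent (hc : G.Connected) (ha : G.IsAcyclic) (r : V) {v u₁ u₂ : V}
    (h₁ : G.Adj u₁ v) (h₂ : G.Adj u₂ v)
    (d₁ : G.dist r u₁ + 1 = G.dist r v) (d₂ : G.dist r u₂ + 1 = G.dist r v) : u₁ = u₂ := by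
  obtain ⟨p₁, hp₁, hl₁⟩ := exists_geodesic_path hc r u₁
  obtain ⟨p₂, hp₂, hl₂⟩ := exists_geodesic_path hc r u₂
  have hv₁ : v ∉ p₁.support := by
    intro hv
    have h1 : G.dist r v ≤ (p₁.takeUntil v hv).length := SimpleGraph.dist_le _
    have h2 := Walk.length_takeUntil_le p₁ hv
    omega
  have hv₂ : v ∉ p₂.support := by
    intro hv
    have h1 : G.dist r v ≤ (p₂.takeUntil v hv).length := SimpleGraph.dist_le _
    have h2 := Walk.length_takeUntil_le p₂ hv
    omega
  have hq₁ := concat_isPath hp₁ h₁ hv₁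
  have hq₂ := concat_isPath hp₂ h₂ hv₂
  have huniq := ha.path_unique ⟨p₁.concat h₁, hq₁⟩ ⟨p₂.concat h₂, hq₂⟩
  have hw : p₁.concat h₁ = p₂.concat h₂ := congrArg Subtype.val huniq
  obtain ⟨hv, -⟩ := Walk.concat_inj hw
  exact hv

lemma connected_exists_adj [Nontrivial V] (hc : G.Connected) (v : V) : ∃ u, G.Adj v u := by
  obtain ⟨w, hw⟩ := exists_ne v
  obtain ⟨p⟩ := hc v w
  cases p with
  | nil => exact absurd rfl hw
  | cons h q => exact ⟨_, h⟩

lemma degree_eq_one_of {v : V} [Fintype V] [DecidableRel G.Adj]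
    (hs : ∀ u₁ u₂, G.Adj v u₁ → G.Adj v u₂ → u₁ = u₂) (he : ∃ u, G.Adj v u) :
    G.degree v = 1 := by
  obtain ⟨u, hu⟩ := he
  rw [← card_neighborFinset_eq_degree, Finset.card_eq_one]
  refine ⟨u, ?_⟩
  ext w
  simp only [mem_neighborFinset, Finset.mem_singleton]
  exact ⟨fun h => hs _ _ h hu, fun h => h ▸ hu⟩

lemma exists_parent (hc : G.Connected) (r : V) {a : V} (hra : a ≠ r) :
    ∃ u, G.Adj u a ∧ G.dist r u + 1 = G.dist r a := by
  obtain ⟨p, hp, hpl⟩ := exists_geodesic_path hc r a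
  have hnn : ¬ p.reverse.Nil := Walk.not_nil_of_ne hra
  obtain ⟨u, h, q, hq⟩ := Walk.not_nil_iff.mp hnn
  refine ⟨u, h.symm, ?_⟩
  have hlen : q.length + 1 = p.length := by
    have := congrArg Walk.length hq
    rw [Walk.length_reverse] at this
    simpa using this.symm
  have h1 : G.dist r u ≤ q.length := by
    have := SimpleGraph.dist_le q.reverse
    rwa [Walk.length_reverse] at this
  have h2 : G.dist r a ≤ G.dist r u + 1 := by
    have htri := hc.dist_triangle (u := r) (v := u) (w := a)
    have hadj : G.dist u a = 1 := SimpleGraph.dist_eq_one_iff_adj.mpr h.symm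
    omega
  omega

lemma exists_leaf [Fintype V] [Nontrivial V] [DecidableRel G.Adj]
    (hc : G.Connected) (ha : G.IsAcyclic) : ∃ r : V, G.degree r = 1 := by
  obtain ⟨w, -⟩ := exists_pair_ne V
  obtain ⟨r, -, hr⟩ := Finset.exists_max_image Finset.univ (G.dist w) ⟨w, Finset.mem_univ w⟩
  refine ⟨r, degree_eq_one_of ?_ (connected_exists_adj hc r)⟩
  have key : ∀ u, G.Adj r u → G.dist w u + 1 = G.dist w r := by
    intro u hu
    have hne := adj_dist_ne hc ha w hu
    have hle := hr u (Finset.mem_univ u)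
    have htri : G.dist w r ≤ G.dist w u + 1 := by
      have h0 := hc.dist_triangle (u := w) (v := u) (w := r)
      have h1 : G.dist u r = 1 := SimpleGraph.dist_eq_one_iff_adj.mpr hu.symm
      omega
    omega
  intro u₁ u₂ hu₁ hu₂
  exact unique_parent hc ha w hu₁.symm hu₂.symm (key u₁ hu₁) (key u₂ hu₂)

end TreeLemmas

lemma univ_isMAGSet {V : Type*} {A : V → V → Prop} (hA : ∀ a, ¬ A a a) :
    IsMAGSet A (Set.univ) := by
  intro a b hab
  have hne : a ≠ b := by rintro rfl; exact hA a hab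
  have hwalk : DWalk A a b [a, b] := .cons hab (.nil b)
  have hmin : ∀ l', DWalk A a b l' → 2 ≤ l'.length := by
    intro l' h'
    by_contra hlt
    push_neg at hlt
    have h1 := h'.one_le_length
    obtain ⟨hab', -⟩ := h'.eq_single (by omega)
    exact hne hab'
  refine ⟨a, trivial, b, trivial, hne, Or.inl ⟨⟨[a, b], hwalk, fun l' h' => hmin l' h'⟩, ?_⟩⟩
  intro l hl
  have h2 : l.length = 2 := le_antisymm (hl.2 [a, b] hwalk) (hmin l hl.1)
  rw [hl.1.eq_pair h2]
  exact ⟨[], [], rfl⟩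

lemma leaf_mem {V : Type*} [Fintype V] {G : SimpleGraph V} [DecidableRel G.Adj]
    {A : V → V → Prop} (hor : IsOrientation G A) {M : Set V} (hM : IsMAGSet A M)
    {v : V} (hv : G.degree v = 1) : v ∈ M := by
  obtain ⟨u, hu⟩ := Finset.card_eq_one.mp
    ((card_neighborFinset_eq_degree G v).trans hv)
  have hadj : G.Adj v u := by
    rw [← mem_neighborFinset, hu]; exact Finset.mem_singleton_self u
  have huniq : ∀ w, G.Adj v w → w = u := by
    intro w hw
    have h1 : w ∈ G.neighborFinset v := (mem_neighborFinset G v w).mpr hw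
    rw [hu] at h1
    exact Finset.mem_singleton.mp h1
  rcases (hor.adj_iff v u).mp hadj with hvu | huv
  · have hsrc : IsSource A v := by
      intro w hw
      have hvw : G.Adj v w := ((hor.adj_iff w v).mpr (Or.inl hw)).symm
      rw [huniq w hvw] at hw
      exact hor.asymm v u hvu hw
    obtain ⟨x, hx, y, hy, hxy, hmon⟩ := hM v u hvu
    rcases hmon with ⟨⟨l, hl⟩, hall⟩ | ⟨⟨l, hl⟩, hall⟩
    · obtain ⟨l₁, l₂, he⟩ := hall l hl
      obtain ⟨-, hxv⟩ := hl.1.start_of_source hsrc he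
      exact hxv ▸ hx
    · obtain ⟨l₁, l₂, he⟩ := hall l hl
      obtain ⟨-, hxv⟩ := hl.1.start_of_source hsrc he
      exact hxv ▸ hy
  · have hsnk : IsSink A v := by
      intro w hw
      have hvw : G.Adj v w := (hor.adj_iff v w).mpr (Or.inl hw)
      rw [huniq w hvw] at hw
      exact hor.asymm u v huv hw
    obtain ⟨x, hx, y, hy, hxy, hmon⟩ := hM u v huv
    rcases hmon with ⟨⟨l, hl⟩, hall⟩ | ⟨⟨l, hl⟩, hall⟩
    · obtain ⟨l₁, l₂, he⟩ := hall l hl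
      have hyv := hl.1.end_of_sink hsnk (l₁ := l₁ ++ [u]) (l₂ := l₂) (by rw [he]; simp)
      exact hyv ▸ hy
    · obtain ⟨l₁, l₂, he⟩ := hall l hl
      have hxv := hl.1.end_of_sink hsnk (l₁ := l₁ ++ [u]) (l₂ := l₂) (by rw [he]; simp)
      exact hxv ▸ hx

/-- for every tree `G`, the lower monitoring arc-geodetic number
equals the number of vertices of degree `1`. -/
theorem tree_magMinus_eq_leaves {V : Type*} [Fintype V] [Nontrivial V]
    (G : SimpleGraph V) [DecidableRel G.Adj]
    (htree : G.Connected ∧ G.IsAcyclic) :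
    magMinus G = (Finset.univ.filter fun v : V => G.degree v = 1).card := by
  classical
  obtain ⟨hc, ha⟩ := htree
  set L : Finset V := Finset.univ.filter fun v : V => G.degree v = 1 with hL
  have lower : ∀ A : V → V → Prop, IsOrientation G A → L.card ≤ mag A := by
    intro A hor
    have hloop : ∀ a, ¬ A a a := fun a h => hor.asymm a a h h
    have hne : {n | ∃ M : Finset V, IsMAGSet A (M : Set V) ∧ M.card = n}.Nonempty :=
      ⟨Finset.univ.card, Finset.univ,
        by rw [Finset.coe_univ]; exact univ_isMAGSet hloop, rfl⟩
    obtain ⟨M, hM, hcard⟩ :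
        ∃ M : Finset V, IsMAGSet A (M : Set V) ∧ M.card = mag A := Nat.sInf_mem hne
    rw [← hcard]
    apply Finset.card_le_card
    intro v hvL
    rw [hL, Finset.mem_filter] at hvL
    exact Finset.mem_coe.mp (leaf_mem hor hM hvL.2)
  obtain ⟨r, hr⟩ := exists_leaf hc ha
  set A₀ : V → V → Prop := fun u v => G.Adj u v ∧ G.dist r u + 1 = G.dist r v with hA₀
  have hdiff : ∀ u v, G.Adj u v →
      G.dist r u + 1 = G.dist r v ∨ G.dist r v + 1 = G.dist r u := by
    intro u v h
    have hne := adj_dist_ne hc ha r h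
    have huv1 : G.dist u v = 1 := dist_eq_one_iff_adj.mpr h
    have hvu1 : G.dist v u = 1 := dist_eq_one_iff_adj.mpr h.symm
    have t1 := hc.dist_triangle (u := r) (v := u) (w := v)
    have t2 := hc.dist_triangle (u := r) (v := v) (w := u)
    omega
  have hor : IsOrientation G A₀ := by
    constructor
    · intro u v
      constructor
      · intro h
        rcases hdiff u v h with h1 | h1
        · exact Or.inl ⟨h, h1⟩
        · exact Or.inr ⟨h.symm, h1⟩
      · rintro (⟨h, -⟩ | ⟨h, -⟩)
        · exact h
        · exact h.symm
    · rintro u v ⟨-, h1⟩ ⟨-, h2⟩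
      omega
  have hstep : ∀ u v, A₀ u v → G.dist r v = G.dist r u + 1 := fun u v h => h.2.symm
  have hinuniq : ∀ v u₁ u₂, A₀ u₁ v → A₀ u₂ v → u₁ = u₂ := by
    intro v u₁ u₂ h₁ h₂
    exact unique_parent hc ha r h₁.1 h₂.1 h₁.2 h₂.2
  have hroot : ∀ a : V, ∃ l, DWalk A₀ r a l := by
    suffices h : ∀ n (a : V), G.dist r a = n → ∃ l, DWalk A₀ r a l by
      exact fun a => h _ a rfl
    intro n
    induction n using Nat.strong_induction_on with
    | _ n ih =>
      intro a hn
      by_cases hra : a = r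
      · subst hra; exact ⟨[a], .nil a⟩
      · obtain ⟨u, hadj, hd⟩ := exists_parent hc r hra
        obtain ⟨l, hl⟩ := ih (G.dist r u) (by omega) u rfl
        exact ⟨l ++ [a], hl.append ⟨hadj, hd⟩ (.nil a)⟩
  have hMAG : IsMAGSet A₀ (L : Set V) := by
    intro a b hab
    have hbmem : b ∈ Finset.univ.filter fun v => ∃ l, DWalk A₀ b v l := by
      simp only [Finset.mem_filter, Finset.mem_univ, true_and]
      exact ⟨[b], .nil b⟩
    obtain ⟨y, hyS, hymax⟩ := Finset.exists_max_image
      (Finset.univ.filter fun v => ∃ l, DWalk A₀ b v l) (G.dist r) ⟨b, hbmem⟩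
    rw [Finset.mem_filter] at hyS
    obtain ⟨-, lb, hlb⟩ := hyS
    have hysink : IsSink A₀ y := by
      intro w hw
      have hwS : w ∈ Finset.univ.filter fun v => ∃ l, DWalk A₀ b v l := by
        simp only [Finset.mem_filter, Finset.mem_univ, true_and]
        exact ⟨lb ++ [w], hlb.append hw (.nil w)⟩
      have h1 := hymax w hwS
      have h2 := hstep _ _ hw
      omega
    have hyleaf : G.degree y = 1 := by
      apply degree_eq_one_of ?_ (connected_exists_adj hc y)
      intro u₁ u₂ h₁ h₂
      have k : ∀ u, G.Adj y u → G.dist r u + 1 = G.dist r y := by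
        intro u hu
        rcases hdiff y u hu with h | h
        · exact absurd ⟨hu, h⟩ (hysink u)
        · exact h
      exact unique_parent hc ha r h₁.symm h₂.symm (k _ h₁) (k _ h₂)
    obtain ⟨la, hla⟩ := hroot a
    have hwalk : DWalk A₀ r y (la ++ lb) := hla.append hab hlb
    have hlen : ∀ l', DWalk A₀ r y l' → l'.length = (la ++ lb).length := by
      intro l' h'
      have e1 := h'.length_eq hstep
      have e2 := hwalk.length_eq hstep
      omega
    have hshort : IsShortest A₀ r y (la ++ lb) :=
      ⟨hwalk, fun l' h' => (hlen l' h').ge⟩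
    have hry : r ≠ y := by
      have hfy : G.dist r b ≤ G.dist r y := by
        have e1 := hlb.length_eq hstep
        have e2 := hlb.one_le_length
        omega
      have hb1 : G.dist r b = G.dist r a + 1 := hstep a b hab
      intro hr'
      rw [← hr'] at hfy
      rw [SimpleGraph.dist_self] at hfy
      omega
    refine ⟨r, ?_, y, ?_, hry, Or.inl ⟨⟨la ++ lb, hshort⟩, ?_⟩⟩
    · rw [hL]
      simp only [Finset.coe_filter, Set.mem_setOf_eq, Finset.mem_univ, true_and]
      exact hr
    · rw [hL]
      simp only [Finset.coe_filter, Set.mem_setOf_eq, Finset.mem_univ, true_and]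
      exact hyleaf
    · intro l hl
      have heql : l = la ++ lb :=
        DWalk.unique hinuniq hl.1 hwalk (hlen l hl.1)
      obtain ⟨tb, htb⟩ := hlb.head_eq
      refine ⟨la.dropLast, tb, ?_⟩
      rw [heql, htb]
      conv_lhs => rw [← List.dropLast_concat_getLast hla.ne_nil]
      rw [hla.getLast_eq hla.ne_nil]
      simp
  have hmagA₀ : mag A₀ = L.card :=
    le_antisymm (Nat.sInf_le ⟨L, hMAG, rfl⟩) (lower A₀ hor)
  apply le_antisymm
  · exact Nat.sInf_le ⟨A₀, hor, hmagA₀⟩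
  · refine le_csInf ⟨L.card, A₀, hor, hmagA₀⟩ ?_
    rintro n ⟨A, horA, rfl⟩
    exact lower A horA


end MAG
end

section
/- Let n ≥ 4 be even, and orient the cycle C_n so that it has exactly one source v_1 and exactly one sink v_{n/2+1}, which are at distance n/2 from each other along both paths of the cycle. Then the monitoring arc-geodetic number of this oriented cycle equals 4. -/
namespace MAG

variable {V : Type*}

section Generic
variable {A : V → V → Prop}

lemma walk_head {x y : V} {l : List V} (h : DWalk A x y l) : ∃ t, l = x :: t := by
  cases h <;> exact ⟨_, rfl⟩

lemma sink_walk {s y : V} {l : List V} (hs : ∀ u, ¬ A s u) (h : DWalk A s y l) : y = s := by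
  cases h with
  | nil => rfl
  | cons h p => exact absurd h (hs _)

lemma walk_suffix {x y : V} {l : List V} (h : DWalk A x y l) :
    ∀ l₁ (c : V) l₂, l = l₁ ++ c :: l₂ → DWalk A c y (c :: l₂) := by
  induction h with
  | nil v =>
    intro l₁ c l₂ he
    cases l₁ with
    | nil => simp at he; obtain ⟨rfl, rfl⟩ := he; exact DWalk.nil v
    | cons d t => simp at he
  | cons h p ih =>
    intro l₁ c l₂ he
    cases l₁ with
    | nil =>
      simp at he; obtain ⟨rfl, rfl⟩ := he; exact DWalk.cons h p
    | cons d t =>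
      simp at he
      exact ih t c l₂ he.2

lemma start_of_arcOn {a b : V} (hA : ∀ u, ¬ A u a) :
    ∀ {x y : V} {l : List V}, DWalk A x y l → ArcOn a b l → x = a := by
  intro x y l h
  induction h with
  | nil v =>
    rintro ⟨l₁, l₂, he⟩
    have := congrArg List.length he
    simp at this
    omega
  | cons h p ih =>
    rintro ⟨l₁, l₂, he⟩
    cases l₁ with
    | nil => simp at he; exact he.1
    | cons d t =>
      simp at he
      exact absurd (ih ⟨t, l₂, he.2⟩ ▸ h) (hA _)

lemma end_of_arcOn {a b : V} (hB : ∀ u, ¬ A b u) :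
    ∀ {x y : V} {l : List V}, DWalk A x y l → ArcOn a b l → y = b := by
  intro x y l h
  induction h with
  | nil v =>
    rintro ⟨l₁, l₂, he⟩
    have := congrArg List.length he
    simp at this
    omega
  | cons h p ih =>
    rintro ⟨l₁, l₂, he⟩
    cases l₁ with
    | nil =>
      simp at he
      obtain ⟨rfl, rfl⟩ := he
      obtain ⟨t, ht⟩ := walk_head p
      have hv : _ = b := (List.cons.injEq _ _ _ _ ▸ ht.symm).1
      exact hv ▸ sink_walk (hv ▸ hB) p
    | cons d t =>
      simp at he
      exact ih ⟨t, l₂, he.2⟩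

lemma arcOn_cons {a b c : V} {l : List V} (h : ArcOn a b l) : ArcOn a b (c :: l) := by
  obtain ⟨l₁, l₂, rfl⟩ := h
  exact ⟨c :: l₁, l₂, rfl⟩

lemma arcOn_mem_fst {a b : V} {l : List V} (h : ArcOn a b l) : a ∈ l := by
  obtain ⟨l₁, l₂, rfl⟩ := h; simp

lemma arcOn_mem_snd {a b : V} {l : List V} (h : ArcOn a b l) : b ∈ l := by
  obtain ⟨l₁, l₂, rfl⟩ := h; simp

lemma walk_of_length_two {x y : V} {l : List V} (h : DWalk A x y l) (hl : l.length = 2) :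
    A x y ∧ l = [x, y] := by
  cases h with
  | nil => simp at hl
  | cons h p =>
    cases p with
    | nil => exact ⟨h, rfl⟩
    | cons h' p' =>
      obtain ⟨t, rfl⟩ := walk_head p'
      simp at hl

end Generic

end MAG
namespace MAG

section Cyc
variable {m : ℕ}

def cyc (m : ℕ) : Fin (2 * m) → Fin (2 * m) → Prop := fun i j =>
  (i.val < m ∧ j.val = i.val + 1) ∨
  (i.val = 0 ∧ j.val = 2 * m - 1) ∨
  (m + 1 ≤ i.val ∧ j.val = i.val - 1)

def phi (m : ℕ) (i : Fin (2 * m)) : ℕ := if i.val ≤ m then m - i.val else i.val - m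

lemma arc_phi (hm : 2 ≤ m) {u v : Fin (2 * m)} (h : cyc m u v) : phi m v + 1 = phi m u := by
  have hu := u.isLt
  have hv := v.isLt
  simp only [cyc] at h
  unfold phi
  split_ifs <;> omega

lemma walk_length (hm : 2 ≤ m) {x y : Fin (2 * m)} {l : List (Fin (2 * m))}
    (h : DWalk (cyc m) x y l) : l.length + phi m y = phi m x + 1 := by
  induction h with
  | nil v => simp only [List.length_singleton]; omega
  | cons h p ih =>
    have := arc_phi hm h
    simp only [List.length_cons]
    omega

lemma shortest_iff (hm : 2 ≤ m) {x y : Fin (2 * m)} {l : List (Fin (2 * m))} :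
    IsShortest (cyc m) x y l ↔ DWalk (cyc m) x y l := by
  refine ⟨fun h => h.1, fun h => ⟨h, fun l' h' => ?_⟩⟩
  have h1 := walk_length hm h
  have h2 := walk_length hm h'
  omega

lemma no_in_zero (hm : 2 ≤ m) {a : Fin (2 * m)} (ha : a.val = 0) :
    ∀ u, ¬ cyc m u a := by
  intro u h
  have hu := u.isLt
  simp only [cyc] at h
  omega

lemma no_out_m (hm : 2 ≤ m) {a : Fin (2 * m)} (ha : a.val = m) :
    ∀ u, ¬ cyc m a u := by
  intro u h
  simp only [cyc] at h
  omega

lemma top_closed (hm : 2 ≤ m) {x y : Fin (2 * m)} {l : List (Fin (2 * m))}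
    (h : DWalk (cyc m) x y l) : 1 ≤ x.val → x.val ≤ m → x.val ≤ y.val ∧ y.val ≤ m := by
  induction h with
  | nil v => intro h1 h2; omega
  | cons h p ih =>
    intro h1 h2
    simp only [cyc] at h
    rcases h with ⟨hu, hv⟩ | ⟨hu, hv⟩ | ⟨hu, hv⟩
    · have := ih (by omega) (by omega)
      omega
    · omega
    · omega

lemma bot_closed (hm : 2 ≤ m) {x y : Fin (2 * m)} {l : List (Fin (2 * m))}
    (h : DWalk (cyc m) x y l) : m ≤ x.val → m ≤ y.val ∧ y.val ≤ x.val := by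
  induction h with
  | nil v => intro h1; omega
  | cons h p ih =>
    intro h1
    simp only [cyc] at h
    rcases h with ⟨hu, hv⟩ | ⟨hu, hv⟩ | ⟨hu, hv⟩
    · omega
    · omega
    · have := ih (by omega)
      omega

lemma top_walk (hm : 2 ≤ m) :
    ∀ k j (h1 : 1 ≤ j) (h2 : j + k = m),
      ∃ l, DWalk (cyc m) ⟨j, by omega⟩ ⟨m, by omega⟩ l ∧ ∀ z ∈ l, j ≤ z.val ∧ z.val ≤ m := by
  intro k
  induction k with
  | zero =>
    intro j h1 h2
    refine ⟨[⟨j, by omega⟩], ?_, ?_⟩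
    · have he : (⟨m, by omega⟩ : Fin (2 * m)) = ⟨j, by omega⟩ := Fin.mk_eq_mk.mpr (by omega)
      rw [he]
      exact DWalk.nil _
    · intro z hz
      rcases List.mem_singleton.mp hz with rfl
      exact ⟨Nat.le_refl _, (by omega : j ≤ m)⟩
  | succ k ih =>
    intro j h1 h2
    obtain ⟨l, hl, hmem⟩ := ih (j + 1) (by omega) (by omega)
    have harc : cyc m ⟨j, by omega⟩ ⟨j + 1, by omega⟩ :=
      Or.inl ⟨(by omega : j < m), (by omega : j + 1 = j + 1)⟩
    refine ⟨⟨j, by omega⟩ :: l, DWalk.cons harc hl, ?_⟩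
    intro z hz
    rcases List.mem_cons.mp hz with rfl | hz
    · exact ⟨Nat.le_refl _, (by omega : j ≤ m)⟩
    · have := hmem z hz; omega

lemma bot_walk (hm : 2 ≤ m) :
    ∀ k j (h1 : j = m + k) (h2 : j ≤ 2 * m - 1),
      ∃ l, DWalk (cyc m) ⟨j, by omega⟩ ⟨m, by omega⟩ l ∧ ∀ z ∈ l, m ≤ z.val ∧ z.val ≤ j := by
  intro k
  induction k with
  | zero =>
    intro j h1 h2
    refine ⟨[⟨j, by omega⟩], ?_, ?_⟩
    · have he : (⟨m, by omega⟩ : Fin (2 * m)) = ⟨j, by omega⟩ := Fin.mk_eq_mk.mpr (by omega)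
      rw [he]
      exact DWalk.nil _
    · intro z hz
      rcases List.mem_singleton.mp hz with rfl
      exact ⟨(by omega : m ≤ j), Nat.le_refl _⟩
  | succ k ih =>
    intro j h1 h2
    obtain ⟨l, hl, hmem⟩ := ih (j - 1) (by omega) (by omega)
    have harc : cyc m ⟨j, by omega⟩ ⟨j - 1, by omega⟩ :=
      Or.inr (Or.inr ⟨(by omega : m + 1 ≤ j), (by omega : j - 1 = j - 1)⟩)
    refine ⟨⟨j, by omega⟩ :: l, DWalk.cons harc hl, ?_⟩
    intro z hz
    rcases List.mem_cons.mp hz with rfl | hz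
    · exact ⟨(by omega : m ≤ j), Nat.le_refl _⟩
    · have := hmem z hz; omega

lemma mem_arc_top (hm : 2 ≤ m) {a b : Fin (2 * m)}
    (ha1 : 1 ≤ a.val) (ha2 : a.val < m) (hb : b.val = a.val + 1) :
    ∀ {x y : Fin (2 * m)} {l : List (Fin (2 * m))}, DWalk (cyc m) x y l →
      y.val = m → 1 ≤ x.val → x.val ≤ a.val → ArcOn a b l := by
  intro x y l h
  induction h with
  | nil v => intro hy h1 h2; exfalso; omega
  | cons h p ih =>
    rename_i u v w t
    intro hy h1 h2
    have hcyc := h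
    simp only [cyc] at hcyc
    rcases hcyc with ⟨hu, hv⟩ | ⟨hu, hv⟩ | ⟨hu, hv⟩
    · by_cases hua : u.val = a.val
      · obtain ⟨t', rfl⟩ := walk_head p
        have hfa : u = a := Fin.ext hua
        have hfb : v = b := Fin.ext (by omega)
        exact ⟨[], t', by simp [hfa, hfb]⟩
      · exact arcOn_cons (ih hy (by omega) (by omega))
    · omega
    · omega

lemma mem_arc_bot (hm : 2 ≤ m) {a b : Fin (2 * m)}
    (ha1 : m + 1 ≤ a.val) (hb : b.val = a.val - 1) :
    ∀ {x y : Fin (2 * m)} {l : List (Fin (2 * m))}, DWalk (cyc m) x y l →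
      y.val = m → a.val ≤ x.val → ArcOn a b l := by
  intro x y l h
  induction h with
  | nil v => intro hy h1; exfalso; omega
  | cons h p ih =>
    rename_i u v w t
    intro hy h1
    have hcyc := h
    simp only [cyc] at hcyc
    rcases hcyc with ⟨hu, hv⟩ | ⟨hu, hv⟩ | ⟨hu, hv⟩
    · omega
    · omega
    · by_cases hua : u.val = a.val
      · obtain ⟨t', rfl⟩ := walk_head p
        have hfa : u = a := Fin.ext hua
        have hfb : v = b := Fin.ext (by omega)
        exact ⟨[], t', by simp [hfa, hfb]⟩
      · exact arcOn_cons (ih hy (by omega))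


lemma walk_len_two_top (hm : 2 ≤ m) {x y : Fin (2 * m)} {l : List (Fin (2 * m))}
    (h : DWalk (cyc m) x y l) (hx : x.val = 0) (hy : y.val = 1) : l = [x, y] := by
  have hlen := walk_length hm h
  have ex : phi m x = m := by unfold phi; rw [hx]; simp
  have ey : phi m y = m - 1 := by unfold phi; rw [hy, if_pos (by omega : 1 ≤ m)]
  exact (walk_of_length_two h (by omega)).2

lemma walk_len_two_bot (hm : 2 ≤ m) {x y : Fin (2 * m)} {l : List (Fin (2 * m))}
    (h : DWalk (cyc m) x y l) (hx : x.val = 0) (hy : y.val = 2 * m - 1) : l = [x, y] := by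
  have hlen := walk_length hm h
  have ex : phi m x = m := by unfold phi; rw [hx]; simp
  have ey : phi m y = m - 1 := by
    unfold phi; rw [hy, if_neg (by omega : ¬ 2 * m - 1 ≤ m)]; omega
  exact (walk_of_length_two h (by omega)).2

lemma lower01 (hm : 2 ≤ m) {s t a b : Fin (2 * m)} (ha : a.val = 0) (hb : b.val = 1)
    (hex : ∃ l, IsShortest (cyc m) s t l)
    (hall : ∀ l, IsShortest (cyc m) s t l → ArcOn a b l) :
    s.val = 0 ∧ 1 ≤ t.val ∧ t.val ≤ m - 1 := by
  obtain ⟨l0, hs0⟩ := hex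
  have hw := hs0.1
  have haon := hall l0 hs0
  have hsval : s.val = 0 := by
    rw [start_of_arcOn (no_in_zero hm ha) hw haon]; exact ha
  obtain ⟨l₁, l₂, he⟩ := haon
  have hsuf : DWalk (cyc m) b t (b :: l₂) :=
    walk_suffix hw (l₁ ++ [a]) b l₂ (by rw [he]; simp)
  have htb := top_closed hm hsuf (by omega) (by omega)
  have p0' : 0 < 2 * m := by omega
  have pm' : m < 2 * m := by omega
  have pz' : 2 * m - 1 < 2 * m := by omega
  have htm : t.val ≠ m := by
    intro htm
    obtain ⟨lb, hwb, hmemb⟩ := bot_walk hm (m - 1) (2 * m - 1) (by omega) (by omega)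
    have harc : cyc m ⟨0, p0'⟩ ⟨2 * m - 1, pz'⟩ := Or.inr (Or.inl ⟨rfl, rfl⟩)
    have hwfull : DWalk (cyc m) s t (⟨0, p0'⟩ :: lb) := by
      have h1 : s = ⟨0, p0'⟩ := Fin.ext hsval
      have h2 : t = ⟨m, pm'⟩ := Fin.ext htm
      rw [h1, h2]
      obtain ⟨tb, rfl⟩ := walk_head hwb
      exact DWalk.cons harc hwb
    have hcon := hall _ ((shortest_iff hm).mpr hwfull)
    have hbmem := arcOn_mem_snd hcon
    rcases List.mem_cons.mp hbmem with hbe | hbmem'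
    · have : b.val = 0 := congrArg Fin.val hbe
      omega
    · have := hmemb b hbmem'
      omega
  exact ⟨hsval, by omega, by omega⟩

lemma lower0z (hm : 2 ≤ m) {s t a b : Fin (2 * m)} (ha : a.val = 0) (hb : b.val = 2 * m - 1)
    (hex : ∃ l, IsShortest (cyc m) s t l)
    (hall : ∀ l, IsShortest (cyc m) s t l → ArcOn a b l) :
    m + 1 ≤ t.val ∧ t.val ≤ 2 * m - 1 := by
  obtain ⟨l0, hs0⟩ := hex
  have hw := hs0.1
  have haon := hall l0 hs0
  have hsval : s.val = 0 := by
    rw [start_of_arcOn (no_in_zero hm ha) hw haon]; exact ha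
  obtain ⟨l₁, l₂, he⟩ := haon
  have hsuf : DWalk (cyc m) b t (b :: l₂) :=
    walk_suffix hw (l₁ ++ [a]) b l₂ (by rw [he]; simp)
  have htb := bot_closed hm hsuf (by omega)
  have p0' : 0 < 2 * m := by omega
  have p1' : 1 < 2 * m := by omega
  have pm' : m < 2 * m := by omega
  have htm : t.val ≠ m := by
    intro htm
    obtain ⟨lt, hwt, hmemt⟩ := top_walk hm (m - 1) 1 (by omega) (by omega)
    have harc : cyc m ⟨0, p0'⟩ ⟨1, p1'⟩ :=
      Or.inl ⟨(by omega : 0 < m), (by omega : 1 = 0 + 1)⟩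
    have hwfull : DWalk (cyc m) s t (⟨0, p0'⟩ :: lt) := by
      have h1 : s = ⟨0, p0'⟩ := Fin.ext hsval
      have h2 : t = ⟨m, pm'⟩ := Fin.ext htm
      rw [h1, h2]
      obtain ⟨tt, rfl⟩ := walk_head hwt
      exact DWalk.cons harc hwt
    have hcon := hall _ ((shortest_iff hm).mpr hwfull)
    have hbmem := arcOn_mem_snd hcon
    rcases List.mem_cons.mp hbmem with hbe | hbmem'
    · have : b.val = 0 := congrArg Fin.val hbe
      omega
    · have := hmemt b hbmem'
      omega
  have := t.isLt
  exact ⟨by omega, by omega⟩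

lemma lowerm (hm : 2 ≤ m) {s t a b : Fin (2 * m)} (hb : b.val = m)
    (hex : ∃ l, IsShortest (cyc m) s t l)
    (hall : ∀ l, IsShortest (cyc m) s t l → ArcOn a b l) :
    t.val = m := by
  obtain ⟨l0, hs0⟩ := hex
  have haon := hall l0 hs0
  rw [end_of_arcOn (no_out_m hm hb) hs0.1 haon]
  exact hb

end Cyc


/-- the orientation of an even cycle `C_n` (`n = 2m ≥ 4`) with
exactly one source `v_1` and one sink `v_{n/2+1}` at distance `n/2` has
monitoring arc-geodetic number `4`.  (`0`-based: source is vertex `0`, sink is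
vertex `m`.) -/
theorem evenCycle_one_source_one_sink_mag_eq_four (m : ℕ) (hm : 2 ≤ m) :
    mag (fun i j : Fin (2 * m) =>
      (i.val < m ∧ j.val = i.val + 1) ∨
      (i.val = 0 ∧ j.val = 2 * m - 1) ∨
      (m + 1 ≤ i.val ∧ j.val = i.val - 1)) = 4 := by
  show mag (cyc m) = 4
  have p0 : 0 < 2 * m := by omega
  have p1 : 1 < 2 * m := by omega
  have pm : m < 2 * m := by omega
  have pz : 2 * m - 1 < 2 * m := by omega
  set M : Finset (Fin (2 * m)) := {⟨0, p0⟩, ⟨1, p1⟩, ⟨m, pm⟩, ⟨2 * m - 1, pz⟩} with hM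
  have hmag : IsMAGSet (cyc m) (M : Set (Fin (2 * m))) := by
    intro a b hab
    rcases hab with ⟨ha, hb⟩ | ⟨ha, hb⟩ | ⟨ha, hb⟩
    · by_cases ha0 : a.val = 0
      · -- arc (0,1), pair (0,1)
        refine ⟨⟨0, p0⟩, Finset.mem_coe.mpr (Finset.mem_insert_self _ _),
          ⟨1, p1⟩, Finset.mem_coe.mpr
            (Finset.mem_insert_of_mem (Finset.mem_insert_self _ _)),
          Fin.ne_of_val_ne (show (0 : ℕ) ≠ 1 by omega), ?_⟩
        left
        have harc : cyc m ⟨0, p0⟩ ⟨1, p1⟩ :=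
          Or.inl ⟨(by omega : 0 < m), (by omega : 1 = 0 + 1)⟩
        refine ⟨⟨[⟨0, p0⟩, ⟨1, p1⟩],
          (shortest_iff hm).mpr (DWalk.cons harc (DWalk.nil _))⟩, ?_⟩
        intro l hs
        have hl := walk_len_two_top hm hs.1 rfl rfl
        have hxa : (⟨0, p0⟩ : Fin (2 * m)) = a := Fin.ext (show (0 : ℕ) = a.val by omega)
        have hyb : (⟨1, p1⟩ : Fin (2 * m)) = b := Fin.ext (show (1 : ℕ) = b.val by omega)
        exact ⟨[], [], by rw [hl, hxa, hyb]; rfl⟩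
      · -- arc (a, a+1) with 1 ≤ a, pair (1, m)
        obtain ⟨lt, hwt, hmemt⟩ := top_walk hm (m - 1) 1 (by omega) (by omega)
        refine ⟨⟨1, p1⟩, Finset.mem_coe.mpr
            (Finset.mem_insert_of_mem (Finset.mem_insert_self _ _)),
          ⟨m, pm⟩, Finset.mem_coe.mpr
            (Finset.mem_insert_of_mem (Finset.mem_insert_of_mem (Finset.mem_insert_self _ _))),
          Fin.ne_of_val_ne (show (1 : ℕ) ≠ m by omega), ?_⟩
        left
        refine ⟨⟨lt, (shortest_iff hm).mpr hwt⟩, ?_⟩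
        intro l hs
        exact mem_arc_top hm (by omega) ha hb hs.1 rfl (Nat.le_refl 1) (show (1:ℕ) ≤ a.val by omega)
    · -- arc (0, 2m-1), pair (0, 2m-1)
      refine ⟨⟨0, p0⟩, Finset.mem_coe.mpr (Finset.mem_insert_self _ _),
        ⟨2 * m - 1, pz⟩, Finset.mem_coe.mpr (by
          refine Finset.mem_insert_of_mem (Finset.mem_insert_of_mem
            (Finset.mem_insert_of_mem (Finset.mem_singleton_self _)))),
        Fin.ne_of_val_ne (show (0 : ℕ) ≠ 2 * m - 1 by omega), ?_⟩
      left
      have harc : cyc m ⟨0, p0⟩ ⟨2 * m - 1, pz⟩ := Or.inr (Or.inl ⟨rfl, rfl⟩)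
      refine ⟨⟨[⟨0, p0⟩, ⟨2 * m - 1, pz⟩],
        (shortest_iff hm).mpr (DWalk.cons harc (DWalk.nil _))⟩, ?_⟩
      intro l hs
      have hl := walk_len_two_bot hm hs.1 rfl rfl
      have hxa : (⟨0, p0⟩ : Fin (2 * m)) = a := Fin.ext (show (0 : ℕ) = a.val by omega)
      have hyb : (⟨2 * m - 1, pz⟩ : Fin (2 * m)) = b :=
        Fin.ext (show (2 * m - 1 : ℕ) = b.val by omega)
      exact ⟨[], [], by rw [hl, hxa, hyb]; rfl⟩
    · -- arc (a, a-1) with a ≥ m+1, pair (2m-1, m)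
      obtain ⟨lb, hwb, hmemb⟩ := bot_walk hm (m - 1) (2 * m - 1) (by omega) (by omega)
      refine ⟨⟨2 * m - 1, pz⟩, Finset.mem_coe.mpr (by
          refine Finset.mem_insert_of_mem (Finset.mem_insert_of_mem
            (Finset.mem_insert_of_mem (Finset.mem_singleton_self _)))),
        ⟨m, pm⟩, Finset.mem_coe.mpr
          (Finset.mem_insert_of_mem (Finset.mem_insert_of_mem (Finset.mem_insert_self _ _))),
        Fin.ne_of_val_ne (show (2 * m - 1 : ℕ) ≠ m by omega), ?_⟩
      left
      refine ⟨⟨lb, (shortest_iff hm).mpr hwb⟩, ?_⟩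
      intro l hs
      have haval := a.isLt
      exact mem_arc_bot hm ha hb hs.1 rfl (show a.val ≤ 2 * m - 1 by omega)
  have hcard : M.card = 4 := by
    have nm1 : (⟨0, p0⟩ : Fin (2 * m)) ∉ ({⟨1, p1⟩, ⟨m, pm⟩, ⟨2 * m - 1, pz⟩} : Finset (Fin (2 * m))) := by
      simp only [Finset.mem_insert, Finset.mem_singleton, not_or]
      exact ⟨Fin.ne_of_val_ne (show (0:ℕ) ≠ 1 by omega),
        Fin.ne_of_val_ne (show (0:ℕ) ≠ m by omega),
        Fin.ne_of_val_ne (show (0:ℕ) ≠ 2 * m - 1 by omega)⟩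
    have nm2 : (⟨1, p1⟩ : Fin (2 * m)) ∉ ({⟨m, pm⟩, ⟨2 * m - 1, pz⟩} : Finset (Fin (2 * m))) := by
      simp only [Finset.mem_insert, Finset.mem_singleton, not_or]
      exact ⟨Fin.ne_of_val_ne (show (1:ℕ) ≠ m by omega),
        Fin.ne_of_val_ne (show (1:ℕ) ≠ 2 * m - 1 by omega)⟩
    have nm3 : (⟨m, pm⟩ : Fin (2 * m)) ∉ ({⟨2 * m - 1, pz⟩} : Finset (Fin (2 * m))) := by
      simp only [Finset.mem_singleton]
      exact Fin.ne_of_val_ne (show (m:ℕ) ≠ 2 * m - 1 by omega)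
    rw [hM, Finset.card_insert_of_notMem nm1, Finset.card_insert_of_notMem nm2,
      Finset.card_insert_of_notMem nm3, Finset.card_singleton]
  unfold mag
  refine le_antisymm (Nat.sInf_le ⟨M, hmag, hcard⟩)
    (le_csInf ⟨4, M, hmag, hcard⟩ ?_)
  rintro n ⟨N, hN, rfl⟩
  have harc01 : cyc m ⟨0, p0⟩ ⟨1, p1⟩ :=
    Or.inl ⟨(by omega : 0 < m), (by omega : 1 = 0 + 1)⟩
  have harc0z : cyc m ⟨0, p0⟩ ⟨2 * m - 1, pz⟩ := Or.inr (Or.inl ⟨rfl, rfl⟩)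
  have pm1 : m - 1 < 2 * m := by omega
  have harcm : cyc m ⟨m - 1, pm1⟩ ⟨m, pm⟩ :=
    Or.inl ⟨(by omega : m - 1 < m), (by omega : m = m - 1 + 1)⟩
  obtain ⟨x1, hx1, y1, hy1, hne1, hmon1⟩ := hN _ _ harc01
  obtain ⟨x2, hx2, y2, hy2, hne2, hmon2⟩ := hN _ _ harc0z
  obtain ⟨x3, hx3, y3, hy3, hne3, hmon3⟩ := hN _ _ harcm
  have H1 : ∃ s ∈ N, ∃ t ∈ N, s.val = 0 ∧ 1 ≤ t.val ∧ t.val ≤ m - 1 := by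
    rcases hmon1 with ⟨hex, hall⟩ | ⟨hex, hall⟩
    · obtain ⟨hs, ht1, ht2⟩ := lower01 hm rfl rfl hex hall
      exact ⟨x1, Finset.mem_coe.mp hx1, y1, Finset.mem_coe.mp hy1, hs, ht1, ht2⟩
    · obtain ⟨hs, ht1, ht2⟩ := lower01 hm rfl rfl hex hall
      exact ⟨y1, Finset.mem_coe.mp hy1, x1, Finset.mem_coe.mp hx1, hs, ht1, ht2⟩
  have H2 : ∃ t ∈ N, m + 1 ≤ t.val ∧ t.val ≤ 2 * m - 1 := by
    rcases hmon2 with ⟨hex, hall⟩ | ⟨hex, hall⟩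
    · obtain ⟨ht1, ht2⟩ := lower0z hm rfl rfl hex hall
      exact ⟨y2, Finset.mem_coe.mp hy2, ht1, ht2⟩
    · obtain ⟨ht1, ht2⟩ := lower0z hm rfl rfl hex hall
      exact ⟨x2, Finset.mem_coe.mp hx2, ht1, ht2⟩
  have H3 : ∃ t ∈ N, t.val = m := by
    rcases hmon3 with ⟨hex, hall⟩ | ⟨hex, hall⟩
    · exact ⟨y3, Finset.mem_coe.mp hy3, lowerm hm rfl hex hall⟩
    · exact ⟨x3, Finset.mem_coe.mp hx3, lowerm hm rfl hex hall⟩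
  obtain ⟨w0, hw0, w1, hw1, h0v, h1a, h1b⟩ := H1
  obtain ⟨w2, hw2, h2a, h2b⟩ := H2
  obtain ⟨wm, hwm, hmv⟩ := H3
  have hsub : ({w0, w1, wm, w2} : Finset (Fin (2 * m))) ⊆ N := by
    simp only [Finset.insert_subset_iff, Finset.singleton_subset_iff]
    exact ⟨hw0, hw1, hwm, hw2⟩
  have nm1 : w0 ∉ ({w1, wm, w2} : Finset (Fin (2 * m))) := by
    simp only [Finset.mem_insert, Finset.mem_singleton, not_or]
    exact ⟨Fin.ne_of_val_ne (by omega), Fin.ne_of_val_ne (by omega),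
      Fin.ne_of_val_ne (by omega)⟩
  have nm2 : w1 ∉ ({wm, w2} : Finset (Fin (2 * m))) := by
    simp only [Finset.mem_insert, Finset.mem_singleton, not_or]
    exact ⟨Fin.ne_of_val_ne (by omega), Fin.ne_of_val_ne (by omega)⟩
  have nm3 : wm ∉ ({w2} : Finset (Fin (2 * m))) := by
    simp only [Finset.mem_singleton]
    exact Fin.ne_of_val_ne (by omega)
  have h4 : ({w0, w1, wm, w2} : Finset (Fin (2 * m))).card = 4 := by
    rw [Finset.card_insert_of_notMem nm1, Finset.card_insert_of_notMem nm2,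
      Finset.card_insert_of_notMem nm3, Finset.card_singleton]
  calc (4 : ℕ) = ({w0, w1, wm, w2} : Finset (Fin (2 * m))).card := h4.symm
    _ ≤ N.card := Finset.card_le_card hsub


end MAG
end

section
/- Let an orientation of a cycle have at least two sources and at least two sinks. Then its minimum monitoring arc-geodetic set is exactly the set of its sources and sinks, so its monitoring arc-geodetic number equals the number of sources and sinks. -/
namespace MAG

variable {V : Type*}

set_option linter.unusedSectionVars false

section AuxGeneric

variable {A : V → V → Prop}

lemma dwalk_head {x y c : V} {l : List V} (h : DWalk A x y (c :: l)) : x = c := by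
  cases h <;> rfl

lemma dwalk_arc {a b x y : V} {l : List V} (h : DWalk A x y l) :
    ∀ (l₁ l₂ : List V), l = l₁ ++ a :: b :: l₂ → A a b := by
  induction h with
  | nil v =>
    intro l₁ l₂ he
    exfalso
    have hlen := congrArg List.length he
    simp at hlen
    omega
  | @cons u v w l h p ih =>
    intro l₁ l₂ he
    cases l₁ with
    | nil =>
      simp only [List.nil_append] at he
      injection he with h1 h2
      subst h1
      have h3 : v = b := by rw [h2] at p; exact dwalk_head p
      exact h3 ▸ h
    | cons c l₁' =>
      simp only [List.cons_append] at he
      injection he with h1 h2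
      exact ih l₁' l₂ h2

lemma dwalk_last {x y : V} {l : List V} (h : DWalk A x y l) : l.getLast? = some y := by
  induction h with
  | nil v => rfl
  | @cons u v w l h p ih =>
    cases l with
    | nil => cases p
    | cons c l' => rw [List.getLast?_cons_cons]; exact ih

lemma src_end {x y v b : V} {l₁ l₂ : List V}
    (h : DWalk A x y (l₁ ++ v :: b :: l₂)) (hv : IsSource A v) : x = v := by
  rcases List.eq_nil_or_concat l₁ with rfl | ⟨l₁', u, rfl⟩
  · exact dwalk_head h
  · have h' : DWalk A x y (l₁' ++ u :: v :: b :: l₂) := by simpa using h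
    exact absurd (dwalk_arc h' l₁' (b :: l₂) rfl) (hv u)

lemma snk_end {x y v c : V} {l₁ l₂ : List V}
    (h : DWalk A x y (l₁ ++ c :: v :: l₂)) (hv : IsSink A v) : y = v := by
  rcases l₂ with _ | ⟨d, l₂'⟩
  · have h2 := dwalk_last h
    rw [show l₁ ++ [c, v] = (l₁ ++ [c]) ++ [v] by simp, List.getLast?_concat] at h2
    exact (Option.some_injective _ h2).symm
  · have h' : DWalk A x y ((l₁ ++ [c]) ++ v :: d :: l₂') := by simpa using h
    exact absurd (dwalk_arc h' (l₁ ++ [c]) l₂' rfl) (hv d)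

end AuxGeneric

/-- The list `[x, x+1, ..., x+k]`. -/
def plusL {n : ℕ} (x : ZMod n) : ℕ → List (ZMod n)
  | 0 => [x]
  | k+1 => x :: plusL (x+1) k

/-- The list `[x, x-1, ..., x-k]`. -/
def minusL {n : ℕ} (x : ZMod n) : ℕ → List (ZMod n)
  | 0 => [x]
  | k+1 => x :: minusL (x-1) k

section AuxZMod

variable {n : ℕ} [NeZero n] {f : ZMod n → Bool} {A : ZMod n → ZMod n → Prop}

lemma val_cast_eq (a : ZMod n) : ((a.val : ℕ) : ZMod n) = a := by
  simp [ZMod.natCast_val, ZMod.cast_id]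

lemma plusL_head (x : ZMod n) (k : ℕ) : ∃ t, plusL x k = x :: t := by
  cases k <;> exact ⟨_, rfl⟩

lemma minusL_head (x : ZMod n) (k : ℕ) : ∃ t, minusL x k = x :: t := by
  cases k <;> exact ⟨_, rfl⟩

variable (hA : ∀ i j : ZMod n, A i j ↔ ((j = i + 1 ∧ f i = true) ∨
      (i = j + 1 ∧ f j = false)))

include hA

lemma arc_plus {i : ZMod n} (h : f i = true) : A i (i+1) :=
  (hA i (i+1)).2 (Or.inl ⟨rfl, h⟩)

lemma arc_minus {i : ZMod n} (h : f i = false) : A (i+1) i :=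
  (hA (i+1) i).2 (Or.inr ⟨rfl, h⟩)

lemma source_iff (v : ZMod n) : IsSource A v ↔ (f (v - 1) = false ∧ f v = true) := by
  constructor
  · intro h
    refine ⟨?_, ?_⟩
    · by_contra hc
      have hc' : f (v-1) = true := by simpa using hc
      have h2 := arc_plus hA hc'
      rw [show v - 1 + 1 = v from by ring] at h2
      exact h _ h2
    · by_contra hc
      have hc' : f v = false := by simpa using hc
      exact h _ (arc_minus hA hc')
  · rintro ⟨h1, h2⟩ w hw
    rcases (hA w v).1 hw with ⟨hv, hf⟩ | ⟨hw', hf⟩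
    · rw [show w = v - 1 from by rw [hv]; ring, h1] at hf
      exact Bool.noConfusion hf
    · rw [h2] at hf
      exact Bool.noConfusion hf

lemma sink_iff (v : ZMod n) : IsSink A v ↔ (f (v - 1) = true ∧ f v = false) := by
  constructor
  · intro h
    refine ⟨?_, ?_⟩
    · by_contra hc
      have hc' : f (v-1) = false := by simpa using hc
      have h2 := arc_minus hA hc'
      rw [show v - 1 + 1 = v from by ring] at h2
      exact h _ h2
    · by_contra hc
      have hc' : f v = true := by simpa using hc
      exact h _ (arc_plus hA hc')
  · rintro ⟨h1, h2⟩ w hw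
    rcases (hA v w).1 hw with ⟨hw', hf⟩ | ⟨hv', hf⟩
    · rw [h2] at hf
      exact Bool.noConfusion hf
    · rw [show w = v - 1 from by rw [hv']; ring, h1] at hf
      exact Bool.noConfusion hf

lemma dwalk_plus (k : ℕ) : ∀ (x : ZMod n),
    (∀ i : ℕ, i < k → f (x + (i:ZMod n)) = true) →
    DWalk A x (x + (k:ZMod n)) (plusL x k) := by
  induction k with
  | zero =>
    intro x h
    rw [show x + ((0:ℕ):ZMod n) = x from by push_cast; ring]
    exact DWalk.nil x
  | succ k ih =>
    intro x h
    have h0 : f x = true := by simpa using h 0 (Nat.succ_pos k)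
    rw [show x + ((k+1:ℕ):ZMod n) = (x+1) + (k:ZMod n) from by push_cast; ring,
      show plusL x (k+1) = x :: plusL (x+1) k from rfl]
    refine DWalk.cons (arc_plus hA h0) (ih (x+1) ?_)
    intro i hi
    have h2 := h (i+1) (by omega)
    rwa [show x + ((i+1:ℕ):ZMod n) = (x+1) + (i:ZMod n) from by push_cast; ring] at h2

lemma dwalk_minus (k : ℕ) : ∀ (x : ZMod n),
    (∀ i : ℕ, i < k → f (x - (i:ZMod n) - 1) = false) →
    DWalk A x (x - (k:ZMod n)) (minusL x k) := by
  induction k with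
  | zero =>
    intro x h
    rw [show x - ((0:ℕ):ZMod n) = x from by push_cast; ring]
    exact DWalk.nil x
  | succ k ih =>
    intro x h
    have h0 : f (x - 1) = false := by
      have := h 0 (Nat.succ_pos k)
      rwa [show x - ((0:ℕ):ZMod n) - 1 = x - 1 from by push_cast; ring] at this
    have harc : A x (x - 1) := by
      have h2 := arc_minus hA h0
      rwa [show x - 1 + 1 = x from by ring] at h2
    rw [show x - ((k+1:ℕ):ZMod n) = (x-1) - (k:ZMod n) from by push_cast; ring,
      show minusL x (k+1) = x :: minusL (x-1) k from rfl]
    refine DWalk.cons harc (ih (x-1) ?_)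
    intro i hi
    have h2 := h (i+1) (by omega)
    rwa [show x - ((i+1:ℕ):ZMod n) - 1 = (x-1) - (i:ZMod n) - 1 from by push_cast; ring] at h2

lemma dwalk_classify {x y : ZMod n} {l : List (ZMod n)} (h : DWalk A x y l) :
    (∃ k : ℕ, y = x + (k:ZMod n) ∧ l = plusL x k ∧
      ∀ i : ℕ, i < k → f (x + (i:ZMod n)) = true) ∨
    (∃ k : ℕ, y = x - (k:ZMod n) ∧ l = minusL x k ∧
      ∀ i : ℕ, i < k → f (x - (i:ZMod n) - 1) = false) := by
  induction h with
  | nil v =>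
    left
    exact ⟨0, by push_cast; ring, rfl, fun i hi => absurd hi (by omega)⟩
  | @cons u v w l h p ih =>
    rcases (hA u v).1 h with ⟨hv, hfu⟩ | ⟨hu, hfv⟩
    · subst hv
      rcases ih with ⟨k, hy, hl, ht⟩ | ⟨k, hy, hl, hcond⟩
      · left
        refine ⟨k+1, ?_, ?_, ?_⟩
        · rw [hy]; push_cast; ring
        · rw [show plusL u (k+1) = u :: plusL (u+1) k from rfl, hl]
        · intro i hi
          match i, hi with
          | 0, _ => simpa using hfu
          | (j+1), hi =>
            have h2 := ht j (by omega)
            rw [show u + ((j+1:ℕ):ZMod n) = (u+1) + (j:ZMod n) from by push_cast; ring]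
            exact h2
      · cases k with
        | zero =>
          left
          refine ⟨1, ?_, ?_, ?_⟩
          · rw [hy]; push_cast; ring
          · rw [hl]; rfl
          · intro i hi
            match i, hi with
            | 0, _ => simpa using hfu
        | succ k' =>
          exfalso
          have h2 := hcond 0 (Nat.succ_pos k')
          rw [show (u+1) - ((0:ℕ):ZMod n) - 1 = u from by push_cast; ring, hfu] at h2
          exact Bool.noConfusion h2
    · subst hu
      rcases ih with ⟨k, hy, hl, ht⟩ | ⟨k, hy, hl, hcond⟩
      · cases k with
        | zero =>
          right
          refine ⟨1, ?_, ?_, ?_⟩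
          · rw [hy]; push_cast; ring
          · rw [hl]
            rw [show minusL (v+1) 1 = (v+1) :: minusL (v+1-1) 0 from rfl,
              show v + 1 - 1 = v from by ring]
            rfl
          · intro i hi
            match i, hi with
            | 0, _ =>
              rw [show (v+1) - ((0:ℕ):ZMod n) - 1 = v from by push_cast; ring]
              exact hfv
        | succ k' =>
          exfalso
          have h2 := ht 0 (Nat.succ_pos k')
          rw [show v + ((0:ℕ):ZMod n) = v from by push_cast; ring, hfv] at h2
          exact Bool.noConfusion h2
      · right
        refine ⟨k+1, ?_, ?_, ?_⟩
        · rw [hy]; push_cast; ring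
        · rw [show minusL (v+1) (k+1) = (v+1) :: minusL (v+1-1) k from rfl,
            show v + 1 - 1 = v from by ring, hl]
        · intro i hi
          match i, hi with
          | 0, _ =>
            rw [show (v+1) - ((0:ℕ):ZMod n) - 1 = v from by push_cast; ring]
            exact hfv
          | (j+1), hi =>
            have h2 := hcond j (by omega)
            rw [show (v+1) - ((j+1:ℕ):ZMod n) - 1 = v - (j:ZMod n) - 1 from by
              push_cast; ring]
            exact h2

omit hA in
lemma plus_all_true {x : ZMod n} {k : ℕ}
    (h : ∀ i : ℕ, i < k → f (x + (i:ZMod n)) = true) (hk : n ≤ k) :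
    ∀ v, f v = true := by
  intro v
  have h2 := h (v - x).val (lt_of_lt_of_le (ZMod.val_lt _) hk)
  rwa [show x + (((v - x).val : ℕ) : ZMod n) = v from by rw [val_cast_eq]; ring] at h2

omit hA in
lemma minus_all_false {x : ZMod n} {k : ℕ}
    (h : ∀ i : ℕ, i < k → f (x - (i:ZMod n) - 1) = false) (hk : n ≤ k) :
    ∀ v, f v = false := by
  intro v
  have h2 := h (x - 1 - v).val (lt_of_lt_of_le (ZMod.val_lt _) hk)
  rwa [show x - (((x - 1 - v).val : ℕ) : ZMod n) - 1 = v from by rw [val_cast_eq]; ring] at h2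

end AuxZMod
section AuxZMod2

variable {n : ℕ} [NeZero n] {f : ZMod n → Bool} {A : ZMod n → ZMod n → Prop}

lemma arcOn_plusL : ∀ (j k : ℕ) (x : ZMod n), j + 1 ≤ k →
    ArcOn (x + (j:ZMod n)) (x + (j:ZMod n) + 1) (plusL x k) := by
  intro j
  induction j with
  | zero =>
    intro k x hk
    obtain ⟨k', rfl⟩ : ∃ k', k = k' + 1 := ⟨k - 1, by omega⟩
    obtain ⟨t, ht⟩ := plusL_head (x+1) k'
    refine ⟨[], t, ?_⟩
    rw [show plusL x (k'+1) = x :: plusL (x+1) k' from rfl, ht]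
    norm_num
  | succ j ih =>
    intro k x hk
    obtain ⟨k', rfl⟩ : ∃ k', k = k' + 1 := ⟨k - 1, by omega⟩
    have h := ih k' (x+1) (by omega)
    rw [show x + ((j+1:ℕ):ZMod n) = (x+1) + (j:ZMod n) from by push_cast; ring,
      show plusL x (k'+1) = x :: plusL (x+1) k' from rfl]
    exact arcOn_cons h

lemma arcOn_minusL : ∀ (j k : ℕ) (x : ZMod n), j + 1 ≤ k →
    ArcOn (x - (j:ZMod n)) (x - (j:ZMod n) - 1) (minusL x k) := by
  intro j
  induction j with
  | zero =>
    intro k x hk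
    obtain ⟨k', rfl⟩ : ∃ k', k = k' + 1 := ⟨k - 1, by omega⟩
    obtain ⟨t, ht⟩ := minusL_head (x-1) k'
    refine ⟨[], t, ?_⟩
    rw [show minusL x (k'+1) = x :: minusL (x-1) k' from rfl, ht]
    norm_num
  | succ j ih =>
    intro k x hk
    obtain ⟨k', rfl⟩ : ∃ k', k = k' + 1 := ⟨k - 1, by omega⟩
    have h := ih k' (x-1) (by omega)
    rw [show x - ((j+1:ℕ):ZMod n) = (x-1) - (j:ZMod n) from by push_cast; ring,
      show minusL x (k'+1) = x :: minusL (x-1) k' from rfl]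
    exact arcOn_cons h

variable (hA : ∀ i j : ZMod n, A i j ↔ ((j = i + 1 ∧ f i = true) ∨
      (i = j + 1 ∧ f j = false)))

include hA

lemma uniqueWalkPlus
    (hsources : ∃ s₁ s₂ : ZMod n, s₁ ≠ s₂ ∧ IsSource A s₁ ∧ IsSource A s₂)
    {s : ZMod n} {k : ℕ} (hk : 1 ≤ k)
    (htrue : ∀ i : ℕ, i < k → f (s + (i:ZMod n)) = true)
    (hft : f (s + (k:ZMod n)) = false)
    (hfs1 : f (s - 1) = false) :
    ∀ l, DWalk A s (s + (k:ZMod n)) l → l = plusL s k := by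
  have hfs : f s = true := by simpa using htrue 0 hk
  have hkn : k < n := by
    by_contra hc
    have h2 := plus_all_true htrue (by omega) (s - 1)
    rw [hfs1] at h2
    exact Bool.noConfusion h2
  intro l hl
  rcases dwalk_classify hA hl with ⟨k', hy, hl', ht'⟩ | ⟨m, hy, hl', hcond⟩
  · have hk'n : k' < n := by
      by_contra hc
      have h2 := plus_all_true ht' (by omega) (s + (k:ZMod n))
      rw [hft] at h2
      exact Bool.noConfusion h2
    have hkk : k' = k := by
      have h2 := congrArg ZMod.val (add_left_cancel hy)
      rw [ZMod.val_cast_of_lt hkn, ZMod.val_cast_of_lt hk'n] at h2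
      exact h2.symm
    rw [hl', hkk]
  · exfalso
    have hmn : m < n := by
      by_contra hc
      have h2 := minus_all_false hcond (by omega) s
      rw [hfs] at h2
      exact Bool.noConfusion h2
    have hdvd : n ∣ k + m := by
      have h2 : ((k + m : ℕ) : ZMod n) = 0 := by push_cast; linear_combination hy
      exact (ZMod.natCast_eq_zero_iff _ n).1 h2
    have hkm : k + m = n := by
      have h1 := Nat.le_of_dvd (by omega) hdvd
      have h2 : n ∣ (k + m - n) := Nat.dvd_sub hdvd dvd_rfl
      have h3 : k + m - n < n := by omega
      have h4 := Nat.eq_zero_of_dvd_of_lt h2 h3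
      omega
    have hm1 : 1 ≤ m := by omega
    obtain ⟨s₁, s₂, hne, hsrc1, hsrc2⟩ := hsources
    have key : ∀ v, IsSource A v → v = s := by
      intro v hv
      obtain ⟨h1, h2⟩ := (source_iff hA v).1 hv
      have hjn : (v - s).val < n := ZMod.val_lt _
      set j := (v - s).val with hj
      have hvs : v = s + (j:ZMod n) := by rw [hj, val_cast_eq]; ring
      by_cases hjk : j < k
      · rcases Nat.eq_zero_or_pos j with hj0 | hj1
        · rw [hvs, hj0]; norm_num
        · exfalso
          have e : v - 1 = s + ((j-1:ℕ):ZMod n) := by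
            rw [hvs, Nat.cast_sub hj1]; push_cast; ring
          have h3 := htrue (j-1) (by omega)
          rw [← e, h1] at h3
          exact Bool.noConfusion h3
      · exfalso
        have hi : n - j - 1 < m := by omega
        have e : s - ((n-j-1:ℕ):ZMod n) - 1 = v := by
          rw [hvs]
          have hnat : j + (n - j - 1) + 1 = n := by omega
          have hc : ((j + (n - j - 1) + 1 : ℕ) : ZMod n) = 0 := by
            rw [hnat]; exact ZMod.natCast_self n
          rw [Nat.cast_add, Nat.cast_add, Nat.cast_one] at hc
          linear_combination -hc
        have h3 := hcond (n-j-1) hi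
        rw [e, h2] at h3
        exact Bool.noConfusion h3
    exact hne ((key s₁ hsrc1).trans (key s₂ hsrc2).symm)

lemma uniqueWalkMinus
    (hsinks : ∃ t₁ t₂ : ZMod n, t₁ ≠ t₂ ∧ IsSink A t₁ ∧ IsSink A t₂)
    {s : ZMod n} {k : ℕ} (hk : 1 ≤ k)
    (hfalse : ∀ i : ℕ, i < k → f (s - (i:ZMod n) - 1) = false)
    (hfs : f s = true)
    (hft1 : f (s - (k:ZMod n) - 1) = true) :
    ∀ l, DWalk A s (s - (k:ZMod n)) l → l = minusL s k := by
  have hkn : k < n := by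
    by_contra hc
    have h2 := minus_all_false hfalse (by omega) s
    rw [hfs] at h2
    exact Bool.noConfusion h2
  intro l hl
  rcases dwalk_classify hA hl with ⟨k', hy, hl', ht'⟩ | ⟨m, hy, hl', hcond⟩
  · exfalso
    have hk'n : k' < n := by
      by_contra hc
      have h2 := plus_all_true ht' (by omega) (s - 1)
      have h3 := hfalse 0 hk
      rw [show s - ((0:ℕ):ZMod n) - 1 = s - 1 from by push_cast; ring, h2] at h3
      exact Bool.noConfusion h3
    have hdvd : n ∣ k' + k := by
      have h2 : ((k' + k : ℕ) : ZMod n) = 0 := by push_cast; linear_combination -hy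
      exact (ZMod.natCast_eq_zero_iff _ n).1 h2
    have hk'1 : 1 ≤ k' := by
      rcases Nat.eq_zero_or_pos k' with h0 | h1
      · exfalso
        rw [h0] at hdvd
        have := Nat.le_of_dvd (by omega) hdvd
        omega
      · exact h1
    have hkm : k' + k = n := by
      have h1 := Nat.le_of_dvd (by omega) hdvd
      have h2 : n ∣ (k' + k - n) := Nat.dvd_sub hdvd dvd_rfl
      have h3 : k' + k - n < n := by omega
      have h4 := Nat.eq_zero_of_dvd_of_lt h2 h3
      omega
    obtain ⟨t₁, t₂, hne, hsnk1, hsnk2⟩ := hsinks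
    have key : ∀ v, IsSink A v → v = s + ((k':ℕ):ZMod n) := by
      intro v hv
      obtain ⟨h1, h2⟩ := (sink_iff hA v).1 hv
      have hjn : (v - s).val < n := ZMod.val_lt _
      set j := (v - s).val with hj
      have hvs : v = s + (j:ZMod n) := by rw [hj, val_cast_eq]; ring
      by_cases hjk : j < k'
      · exfalso
        have h3 := ht' j hjk
        rw [← hvs, h2] at h3
        exact Bool.noConfusion h3
      · by_cases hjk2 : j = k'
        · rw [hvs, hjk2]
        · exfalso
          -- k' < j < n : f (v - 1) = false
          have hi : n - j < k := by omega
          have e : s - ((n-j:ℕ):ZMod n) - 1 = v - 1 := by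
            rw [hvs]
            have hnat : j + (n - j) = n := by omega
            have hc : ((j + (n - j) : ℕ) : ZMod n) = 0 := by
              rw [hnat]; exact ZMod.natCast_self n
            rw [Nat.cast_add] at hc
            linear_combination -hc
          have h3 := hfalse (n-j) hi
          rw [e, h1] at h3
          exact Bool.noConfusion h3
    exact hne ((key t₁ hsnk1).trans (key t₂ hsnk2).symm)
  · have hmn : m < n := by
      by_contra hc
      have h2 := minus_all_false hcond (by omega) s
      rw [hfs] at h2
      exact Bool.noConfusion h2
    have hkk : m = k := by
      have h5 : ((k:ℕ):ZMod n) = ((m:ℕ):ZMod n) := by linear_combination -hy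
      have h2 := congrArg ZMod.val h5
      rw [ZMod.val_cast_of_lt hkn, ZMod.val_cast_of_lt hmn] at h2
      exact h2.symm
    rw [hl', hkk]

end AuxZMod2
section AuxZMod3

variable {n : ℕ} [NeZero n] {f : ZMod n → Bool} {A : ZMod n → ZMod n → Prop}

variable (hA : ∀ i j : ZMod n, A i j ↔ ((j = i + 1 ∧ f i = true) ∨
      (i = j + 1 ∧ f j = false)))

include hA

lemma sources_sinks_subset {M : Set (ZMod n)} (hM : IsMAGSet A M) :
    {v : ZMod n | IsSource A v ∨ IsSink A v} ⊆ M := by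
  intro v hv
  rcases hv with hsrc | hsnk
  · have hfv : f v = true := ((source_iff hA v).1 hsrc).2
    obtain ⟨x, hx, y, hy, hxy, hmon⟩ := hM v (v+1) (arc_plus hA hfv)
    rcases hmon with ⟨⟨l, hl⟩, hall⟩ | ⟨⟨l, hl⟩, hall⟩
    · obtain ⟨l₁, l₂, hsplit⟩ := hall l hl
      have h2 : x = v := src_end (hsplit ▸ hl.1) hsrc
      rwa [← h2]
    · obtain ⟨l₁, l₂, hsplit⟩ := hall l hl
      have h2 : y = v := src_end (hsplit ▸ hl.1) hsrc
      rwa [← h2]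
  · have h1 : f (v-1) = true := ((sink_iff hA v).1 hsnk).1
    have harc : A (v-1) v := by
      have h2 := arc_plus hA h1
      rwa [show v - 1 + 1 = v from by ring] at h2
    obtain ⟨x, hx, y, hy, hxy, hmon⟩ := hM (v-1) v harc
    rcases hmon with ⟨⟨l, hl⟩, hall⟩ | ⟨⟨l, hl⟩, hall⟩
    · obtain ⟨l₁, l₂, hsplit⟩ := hall l hl
      have h2 : y = v := snk_end (hsplit ▸ hl.1) hsnk
      rwa [← h2]
    · obtain ⟨l₁, l₂, hsplit⟩ := hall l hl
      have h2 : x = v := snk_end (hsplit ▸ hl.1) hsnk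
      rwa [← h2]

lemma isMAGset_sources_sinks
    (hsources : ∃ s₁ s₂ : ZMod n, s₁ ≠ s₂ ∧ IsSource A s₁ ∧ IsSource A s₂)
    (hsinks : ∃ t₁ t₂ : ZMod n, t₁ ≠ t₂ ∧ IsSink A t₁ ∧ IsSink A t₂) :
    IsMAGSet A {v : ZMod n | IsSource A v ∨ IsSink A v} := by
  have hF : ∃ v, f v = false := by
    obtain ⟨s₁, s₂, _, h1, _⟩ := hsources
    exact ⟨s₁ - 1, ((source_iff hA s₁).1 h1).1⟩
  have hT : ∃ v, f v = true := by
    obtain ⟨s₁, s₂, _, h1, _⟩ := hsources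
    exact ⟨s₁, ((source_iff hA s₁).1 h1).2⟩
  intro a b hab
  rcases (hA a b).1 hab with ⟨hb, hfa⟩ | ⟨ha, hfb⟩
  · subst hb
    -- arc a → a + 1, with f a = true
    have hPm : ∃ m : ℕ, 0 < m ∧ f (a + (m:ZMod n)) = false := by
      obtain ⟨v, hv⟩ := hF
      refine ⟨(v - a).val, ?_, ?_⟩
      · rcases Nat.eq_zero_or_pos (v - a).val with h0 | h1
        · exfalso
          have h2 : v - a = 0 := by rw [← val_cast_eq (v - a), h0]; norm_num
          have h3 : v = a := by linear_combination h2
          rw [h3, hfa] at hv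
          exact Bool.noConfusion hv
        · exact h1
      · rwa [show a + (((v - a).val : ℕ):ZMod n) = v from by rw [val_cast_eq]; ring]
    have hm1 : 0 < Nat.find hPm := (Nat.find_spec hPm).1
    have hmf : f (a + ((Nat.find hPm : ℕ):ZMod n)) = false := (Nat.find_spec hPm).2
    set m := Nat.find hPm with hmdef
    have hmmin : ∀ j, 0 < j → j < m → f (a + (j:ZMod n)) = true := by
      intro j hj0 hjm
      cases hfj : f (a + (j:ZMod n)) with
      | false => exact absurd ⟨hj0, hfj⟩ (Nat.find_min hPm hjm)
      | true => rfl
    have hPp : ∃ p : ℕ, f (a - (p:ZMod n) - 1) = false := by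
      obtain ⟨v, hv⟩ := hF
      have hval : 1 ≤ (a - v).val := by
        rcases Nat.eq_zero_or_pos (a - v).val with h0 | h1
        · exfalso
          have h2 : a - v = 0 := by rw [← val_cast_eq (a - v), h0]; norm_num
          have h3 : v = a := by linear_combination -h2
          rw [h3, hfa] at hv
          exact Bool.noConfusion hv
        · exact h1
      refine ⟨(a - v).val - 1, ?_⟩
      rwa [show a - (((a - v).val - 1 : ℕ):ZMod n) - 1 = v from by
        rw [Nat.cast_sub hval, val_cast_eq]; push_cast; ring]
    have hpf : f (a - ((Nat.find hPp : ℕ):ZMod n) - 1) = false := Nat.find_spec hPp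
    set p := Nat.find hPp with hpdef
    have hpmin : ∀ j, j < p → f (a - (j:ZMod n) - 1) = true := by
      intro j hj
      cases hfj : f (a - (j:ZMod n) - 1) with
      | false => exact absurd hfj (Nat.find_min hPp hj)
      | true => rfl
    set s := a - (p:ZMod n) with hs
    set k := p + m with hkdef
    have htrue : ∀ i : ℕ, i < k → f (s + (i:ZMod n)) = true := by
      intro i hi
      by_cases hip : i < p
      · have e : s + (i:ZMod n) = a - ((p - i - 1 : ℕ):ZMod n) - 1 := by
          have hnat : (p - i - 1) + 1 + i = p := by omega
          have hc : ((p - i - 1 : ℕ):ZMod n) + 1 + (i:ZMod n) = ((p:ℕ):ZMod n) := by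
            have hc' := congrArg (Nat.cast : ℕ → ZMod n) hnat
            push_cast at hc'
            linear_combination hc'
          rw [hs]; linear_combination hc
        rw [e]
        exact hpmin (p - i - 1) (by omega)
      · have e : s + (i:ZMod n) = a + ((i - p : ℕ):ZMod n) := by
          rw [hs, Nat.cast_sub (by omega)]; ring
        rw [e]
        rcases Nat.eq_zero_or_pos (i - p) with h0 | h1
        · rw [h0]; simpa using hfa
        · exact hmmin (i - p) h1 (by omega)
    have hfs1 : f (s - 1) = false := by
      rw [show s - 1 = a - ((p:ℕ):ZMod n) - 1 from by rw [hs]]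
      exact hpf
    have hft : f (s + (k:ZMod n)) = false := by
      rw [show s + ((k:ℕ):ZMod n) = a + ((m:ℕ):ZMod n) from by
        rw [hs, hkdef]; push_cast; ring]
      exact hmf
    have hk1 : 1 ≤ k := by omega
    have huniq := uniqueWalkPlus hA hsources hk1 htrue hft hfs1
    have hwalk : DWalk A s (s + (k:ZMod n)) (plusL s k) := dwalk_plus hA k s htrue
    have hshort : IsShortest A s (s + (k:ZMod n)) (plusL s k) :=
      ⟨hwalk, fun l' hl' => by rw [huniq l' hl']⟩
    have hsrc : IsSource A s :=
      (source_iff hA s).2 ⟨hfs1, by simpa using htrue 0 (by omega)⟩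
    have hsnk : IsSink A (s + (k:ZMod n)) := by
      refine (sink_iff hA _).2 ⟨?_, hft⟩
      rw [show s + ((k:ℕ):ZMod n) - 1 = s + ((k-1:ℕ):ZMod n) from by
        rw [Nat.cast_sub hk1]; push_cast; ring]
      exact htrue (k-1) (by omega)
    have hne : s ≠ s + (k:ZMod n) := by
      intro hcon
      have h1 : f s = true := by simpa using htrue 0 (by omega)
      rw [← hcon, h1] at hft
      exact Bool.noConfusion hft
    refine ⟨s, Or.inl hsrc, s + (k:ZMod n), Or.inr hsnk, hne,
      Or.inl ⟨⟨_, hshort⟩, ?_⟩⟩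
    intro l hl
    rw [huniq l hl.1]
    have harc := arcOn_plusL p k s (by omega)
    rwa [show s + ((p:ℕ):ZMod n) = a from by rw [hs]; ring] at harc
  · subst ha
    -- arc (b+1) → b, with f b = false
    have hPp : ∃ p : ℕ, f ((b+1) + (p:ZMod n)) = true := by
      obtain ⟨v, hv⟩ := hT
      refine ⟨(v - (b+1)).val, ?_⟩
      rwa [show (b+1) + (((v - (b+1)).val : ℕ):ZMod n) = v from by
        rw [val_cast_eq]; ring]
    have hpf : f ((b+1) + ((Nat.find hPp : ℕ):ZMod n)) = true := Nat.find_spec hPp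
    set p := Nat.find hPp with hpdef
    have hpmin : ∀ j, j < p → f ((b+1) + (j:ZMod n)) = false := by
      intro j hj
      cases hfj : f ((b+1) + (j:ZMod n)) with
      | true => exact absurd hfj (Nat.find_min hPp hj)
      | false => rfl
    have hPq : ∃ q : ℕ, f ((b+1) - (q:ZMod n) - 2) = true := by
      obtain ⟨v, hv⟩ := hT
      refine ⟨((b+1) - 2 - v).val, ?_⟩
      rwa [show (b+1) - ((((b+1) - 2 - v).val : ℕ):ZMod n) - 2 = v from by
        rw [val_cast_eq]; ring]
    have hqf : f ((b+1) - ((Nat.find hPq : ℕ):ZMod n) - 2) = true := Nat.find_spec hPq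
    set q := Nat.find hPq with hqdef
    have hqmin : ∀ j, j < q → f ((b+1) - (j:ZMod n) - 2) = false := by
      intro j hj
      cases hfj : f ((b+1) - (j:ZMod n) - 2) with
      | true => exact absurd hfj (Nat.find_min hPq hj)
      | false => rfl
    set s := (b+1) + ((p:ℕ):ZMod n) with hs
    set k := p + q + 1 with hkdef
    have hfalse : ∀ i : ℕ, i < k → f (s - (i:ZMod n) - 1) = false := by
      intro i hi
      by_cases hip : i < p
      · have e : s - (i:ZMod n) - 1 = (b+1) + ((p - i - 1 : ℕ):ZMod n) := by
          have hnat : (p - i - 1) + 1 + i = p := by omega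
          have hc : ((p - i - 1 : ℕ):ZMod n) + 1 + (i:ZMod n) = ((p:ℕ):ZMod n) := by
            have hc' := congrArg (Nat.cast : ℕ → ZMod n) hnat
            push_cast at hc'
            linear_combination hc'
          rw [hs]; linear_combination -hc
        rw [e]
        exact hpmin (p - i - 1) (by omega)
      · by_cases hip2 : i = p
        · have e : s - (i:ZMod n) - 1 = b := by rw [hs, hip2]; ring
          rw [e]
          exact hfb
        · have e : s - (i:ZMod n) - 1 = (b+1) - ((i - p - 1 : ℕ):ZMod n) - 2 := by
            have hnat : (i - p - 1) + p + 1 = i := by omega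
            have hc : ((i - p - 1 : ℕ):ZMod n) + ((p:ℕ):ZMod n) + 1 = ((i:ℕ):ZMod n) := by
              have hc' := congrArg (Nat.cast : ℕ → ZMod n) hnat
              push_cast at hc'
              linear_combination hc'
            rw [hs]; linear_combination hc
          rw [e]
          exact hqmin (i - p - 1) (by omega)
    have hfs : f s = true := hpf
    have hft1 : f (s - (k:ZMod n) - 1) = true := by
      rw [show s - ((k:ℕ):ZMod n) - 1 = (b+1) - ((q:ℕ):ZMod n) - 2 from by
        rw [hs, hkdef]; push_cast; ring]
      exact hqf
    have hk1 : 1 ≤ k := by omega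
    have huniq := uniqueWalkMinus hA hsinks hk1 hfalse hfs hft1
    have hwalk : DWalk A s (s - (k:ZMod n)) (minusL s k) := dwalk_minus hA k s hfalse
    have hshort : IsShortest A s (s - (k:ZMod n)) (minusL s k) :=
      ⟨hwalk, fun l' hl' => by rw [huniq l' hl']⟩
    have hsrc : IsSource A s := by
      refine (source_iff hA s).2 ⟨?_, hfs⟩
      have h3 := hfalse 0 (by omega)
      rwa [show s - ((0:ℕ):ZMod n) - 1 = s - 1 from by push_cast; ring] at h3
    have hsnk : IsSink A (s - (k:ZMod n)) := by
      refine (sink_iff hA _).2 ⟨hft1, ?_⟩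
      have h3 := hfalse (k-1) (by omega)
      rwa [show s - ((k-1:ℕ):ZMod n) - 1 = s - ((k:ℕ):ZMod n) from by
        rw [Nat.cast_sub hk1]; push_cast; ring] at h3
    have hne : s ≠ s - (k:ZMod n) := by
      intro hcon
      have h3 := hfalse (k-1) (by omega)
      rw [show s - ((k-1:ℕ):ZMod n) - 1 = s - ((k:ℕ):ZMod n) from by
        rw [Nat.cast_sub hk1]; push_cast; ring, ← hcon, hfs] at h3
      exact Bool.noConfusion h3
    refine ⟨s, Or.inl hsrc, s - (k:ZMod n), Or.inr hsnk, hne,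
      Or.inl ⟨⟨_, hshort⟩, ?_⟩⟩
    intro l hl
    rw [huniq l hl.1]
    have harc := arcOn_minusL p k s (by omega)
    rw [show s - ((p:ℕ):ZMod n) = b + 1 from by rw [hs]; ring] at harc
    rwa [show b + 1 - 1 = b from by ring] at harc

end AuxZMod3

/-- an orientation of a cycle with at least two sources and at
least two sinks has the set of sources and sinks as its unique minimum
MAG-set, and its `mag` equals the number of sources and sinks.  The
orientation of the cycle on `ZMod n` is encoded by `f : ZMod n → Bool`
(`f i = true` iff the edge `{i, i+1}` is oriented from `i` to `i+1`). -/
theorem cycle_many_sources_sinks_mag (n : ℕ) [NeZero n] (hn : 3 ≤ n)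
    (f : ZMod n → Bool)
    (A : ZMod n → ZMod n → Prop)
    (hA : ∀ i j : ZMod n, A i j ↔ ((j = i + 1 ∧ f i = true) ∨
      (i = j + 1 ∧ f j = false)))
    (hsources : ∃ s₁ s₂ : ZMod n, s₁ ≠ s₂ ∧ IsSource A s₁ ∧ IsSource A s₂)
    (hsinks : ∃ t₁ t₂ : ZMod n, t₁ ≠ t₂ ∧ IsSink A t₁ ∧ IsSink A t₂) :
    IsMAGSet A {v : ZMod n | IsSource A v ∨ IsSink A v} ∧
    (∀ M : Set (ZMod n), IsMAGSet A M →
      {v : ZMod n | IsSource A v ∨ IsSink A v} ⊆ M) ∧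
    mag A = {v : ZMod n | IsSource A v ∨ IsSink A v}.ncard := by
    classical
  refine ⟨isMAGset_sources_sinks hA hsources hsinks,
    fun M hM => sources_sinks_subset hA hM, ?_⟩
  set S := {v : ZMod n | IsSource A v ∨ IsSink A v} with hS
  have hfin : S.Finite := Set.toFinite S
  have hmem : S.ncard ∈
      {m | ∃ M : Finset (ZMod n), IsMAGSet A (M : Set (ZMod n)) ∧ M.card = m} := by
    refine ⟨hfin.toFinset, ?_, ?_⟩
    · rw [Set.Finite.coe_toFinset]
      exact isMAGset_sources_sinks hA hsources hsinks
    · exact (Set.ncard_eq_toFinset_card S hfin).symm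
  show sInf _ = S.ncard
  apply le_antisymm
  · exact Nat.sInf_le hmem
  · refine le_csInf ⟨_, hmem⟩ ?_
    rintro m ⟨M, hM, rfl⟩
    have hsub : hfin.toFinset ⊆ M := by
      intro v hv
      rw [Set.Finite.mem_toFinset] at hv
      exact sources_sinks_subset hA hM hv
    calc S.ncard = hfin.toFinset.card := Set.ncard_eq_toFinset_card S hfin
      _ ≤ M.card := Finset.card_le_card hsub

end MAG
end
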